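/- For any constants ζ > 0 and s ∈ ℕ there exists n₀(ζ, s) such that the following holds for n > n₀. Let ζ ≤ k/n ≤ 1 − ζ, let S ⊆ [n] be a set of size s, let i ∈ S, and let ε > 0. If F ⊆ binom([n], k) satisfies μ(F) ≥ k/n − ε and μ(F_{{i}}^∅) ≤ ε, then μ(F_S^{{i}}) ≥ 1 − O_{ζ,s}(ε). -/

import Mathlib

open Finset

open Classical in
lemma countB {n k : ℕ} (hk : 1 ≤ k) (S : Finset (Fin n)) (i : Fin n) (hi : i ∈ S) :
    ((powersetCard k (univ : Finset (Fin n))).filter (fun A => A ∩ S = {i})).card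
      = (n - S.card).choose (k-1) := by
  have h1 : ((powersetCard k (univ : Finset (Fin n))).filter (fun A => A ∩ S = {i})).card
      = ((univ \ S).powersetCard (k-1)).card := by
    refine Finset.card_bij' (fun A _ => A.erase i) (fun B _ => insert i B) ?hi ?hj ?li ?ri
    case hi =>
      intro A hA
      simp only [mem_filter, mem_powersetCard_univ] at hA
      obtain ⟨hcard, hAS⟩ := hA
      have hiA : i ∈ A := by
        have : i ∈ A ∩ S := by rw [hAS]; exact mem_singleton_self i
        exact (mem_inter.mp this).1
      rw [mem_powersetCard]
      constructor
      · intro x hx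
        simp only [mem_erase] at hx
        simp only [mem_sdiff, mem_univ, true_and]
        intro hxS
        have : x ∈ A ∩ S := mem_inter.mpr ⟨hx.2, hxS⟩
        rw [hAS, mem_singleton] at this
        exact hx.1 this
      · rw [card_erase_of_mem hiA, hcard]
    case hj =>
      intro B hB
      rw [mem_powersetCard] at hB
      obtain ⟨hBsub, hBcard⟩ := hB
      have hiB : i ∉ B := fun h => (mem_sdiff.mp (hBsub h)).2 hi
      simp only [mem_filter, mem_powersetCard_univ]
      constructor
      · rw [card_insert_of_notMem hiB, hBcard]; omega
      · ext x
        simp only [mem_inter, mem_insert, mem_singleton]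
        constructor
        · rintro ⟨hx1 | hx1, hx2⟩
          · exact hx1
          · exact absurd hx2 (mem_sdiff.mp (hBsub hx1)).2
        · rintro rfl; exact ⟨Or.inl rfl, hi⟩
    case li =>
      intro A hA
      simp only [mem_filter, mem_powersetCard_univ] at hA
      have hiA : i ∈ A := by
        have : i ∈ A ∩ S := by rw [hA.2]; exact mem_singleton_self i
        exact (mem_inter.mp this).1
      exact insert_erase hiA
    case ri =>
      intro B hB
      rw [mem_powersetCard] at hB
      have hiB : i ∉ B := fun h => (mem_sdiff.mp (hB.1 h)).2 hi
      exact erase_insert hiB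
  rw [h1, card_powersetCard, card_univ_diff, Fintype.card_fin]

lemma ratio_step {m r : ℕ} (c : ℝ) (hr : r < m) (hm : (m : ℝ) ≤ c * ((m - r : ℕ) : ℝ)) :
    ((m.choose r : ℕ) : ℝ) ≤ c * ((m-1).choose r : ℕ) := by
  have hid : (m-1).choose r * m = m.choose r * (m - r) := by
    have h := Nat.choose_mul_succ_eq (m-1) r
    have hm1 : m - 1 + 1 = m := by omega
    rw [hm1] at h
    exact h
  have hpos : (0:ℝ) < ((m - r : ℕ) : ℝ) := by
    have : 0 < m - r := by omega
    exact_mod_cast this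
  have key : ((m.choose r : ℕ):ℝ) * ((m-r:ℕ):ℝ) ≤ (c * ((m-1).choose r : ℕ)) * ((m-r:ℕ):ℝ) := by
    calc ((m.choose r : ℕ):ℝ) * ((m-r:ℕ):ℝ) = ((m-1).choose r : ℕ) * (m:ℝ) := by
          exact_mod_cast congrArg (Nat.cast (R := ℝ)) hid.symm
      _ ≤ ((m-1).choose r : ℕ) * (c * ((m-r:ℕ):ℝ)) := by
          apply mul_le_mul_of_nonneg_left hm (by positivity)
      _ = (c * ((m-1).choose r : ℕ)) * ((m-r:ℕ):ℝ) := by ring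
  exact le_of_mul_le_mul_right key hpos

lemma chain (c : ℝ) (r : ℕ) :
    ∀ (j m : ℕ), (∀ t, t < j → r < m - t ∧ ((m - t : ℕ):ℝ) ≤ c * ((m - t - r : ℕ):ℝ)) →
    ((m.choose r : ℕ):ℝ) ≤ c^j * ((m - j).choose r : ℕ) := by
  intro j
  induction j with
  | zero => intro m _; simp
  | succ j ih =>
    intro m hm
    have h0 := hm 0 (by omega)
    simp only [Nat.sub_zero] at h0
    have step := ratio_step c h0.1 h0.2
    have hc : 0 ≤ c := by
      by_contra hcn
      push_neg at hcn
      have h1 : (0:ℝ) < (m:ℝ) := by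
        have : 0 < m := by omega
        exact_mod_cast this
      nlinarith [h0.2, (Nat.cast_nonneg (m - r) : (0:ℝ) ≤ _)]
    have ih' : ((m-1).choose r : ℝ) ≤ c^j * ((m - 1 - j).choose r : ℕ) := by
      apply ih
      intro t ht
      have e1 : m - 1 - t = m - (t+1) := by omega
      have e2 : m - 1 - t - r = m - (t+1) - r := by omega
      rw [e1]
      exact ⟨(hm (t+1) (by omega)).1, (hm (t+1) (by omega)).2⟩
    calc ((m.choose r : ℕ):ℝ) ≤ c * ((m-1).choose r : ℕ) := step
      _ ≤ c * (c^j * ((m - 1 - j).choose r : ℕ)) := mul_le_mul_of_nonneg_left ih' hc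
      _ = c^(j+1) * ((m - (j+1)).choose r : ℕ) := by rw [Nat.sub_sub]; ring

set_option maxHeartbeats 1000000 in
open Classical in
theorem stmt16 (ζ : ℝ) (hζ : 0 < ζ) (s : ℕ) :
    ∃ (n₀ : ℕ) (K : ℝ), 0 < K ∧
      ∀ (n k : ℕ) (S : Finset (Fin n)) (i : Fin n) (ε : ℝ) (F : Finset (Finset (Fin n))),
        n₀ < n → ζ ≤ (k : ℝ) / n → (k : ℝ) / n ≤ 1 - ζ →
        S.card = s → i ∈ S → 0 < ε →
        (∀ A ∈ F, A.card = k) →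
        (F.card : ℝ) / (n.choose k) ≥ (k : ℝ) / n - ε →
        ((F.filter (fun A => i ∉ A)).card : ℝ) / ((n - 1).choose k) ≤ ε →
        ((F.filter (fun A => A ∩ S = {i})).card : ℝ) / ((n - s).choose (k - 1)) ≥
          1 - K * ε := by
  refine ⟨⌈2 * (s + 1) / ζ⌉₊, 2 * (2/ζ)^s, by positivity, ?_⟩
  intro n k S i ε F hn hk1 hk2 hS hiS hε hcard hF hEm
  have hs1 : 1 ≤ s := by rw [← hS]; exact card_pos.mpr ⟨i, hiS⟩
  have hnR : 2 * ((s:ℝ) + 1) / ζ < n := by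
    calc 2 * ((s:ℝ) + 1) / ζ ≤ (⌈2 * ((s:ℝ) + 1) / ζ⌉₊ : ℝ) := Nat.le_ceil _
      _ < n := by exact_mod_cast hn
  have hζn : 2 * ((s:ℝ) + 1) < ζ * n := by
    rw [div_lt_iff₀ hζ] at hnR; linarith [hnR]
  have hn_pos : 0 < n := by
    rcases Nat.eq_zero_or_pos n with h | h
    · subst h; norm_num at hζn; nlinarith [(Nat.cast_nonneg s : (0:ℝ) ≤ s)]
    · exact h
  have hnR_pos : (0:ℝ) < n := by exact_mod_cast hn_pos
  have hk_real : ζ * n ≤ (k:ℝ) := by rw [le_div_iff₀ hnR_pos] at hk1; linarith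
  have hk_pos : 0 < k := by
    rcases Nat.eq_zero_or_pos k with h | h
    · subst h; norm_num at hk_real; nlinarith
    · exact h
  have hkn_real : (k:ℝ) ≤ (1 - ζ) * n := by rw [div_le_iff₀ hnR_pos] at hk2; linarith
  have hnk : k + 2 * s + 2 ≤ n := by
    have h1 : ((k + 2 * s + 2 : ℕ):ℝ) ≤ n := by push_cast; nlinarith
    exact_mod_cast h1
  have hCn : (0:ℝ) < n.choose k := by
    exact_mod_cast Nat.choose_pos (by omega : k ≤ n)
  have hCn1 : (0:ℝ) < (n-1).choose k := by
    exact_mod_cast Nat.choose_pos (by omega : k ≤ n - 1)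
  have hCns : (0:ℝ) < (n-s).choose (k-1) := by
    exact_mod_cast Nat.choose_pos (by omega : k - 1 ≤ n - s)
  set U := powersetCard k (univ : Finset (Fin n)) with hU
  have hFU : F ⊆ U := fun A hA => mem_powersetCard_univ.mpr (hcard A hA)
  have hUi : (U.filter (fun A => i ∈ A)).card = (n-1).choose (k-1) := by
    have h := countB hk_pos ({i} : Finset (Fin n)) i (mem_singleton_self i)
    rw [card_singleton] at h
    rw [← h]
    apply congrArg
    apply filter_congr
    intro A _
    constructor
    · intro hiA
      ext x
      simp only [mem_inter, mem_singleton]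
      constructor
      · exact fun hx => hx.2
      · rintro rfl; exact ⟨hiA, rfl⟩
    · intro h
      have : i ∈ A ∩ ({i} : Finset (Fin n)) := by rw [h]; exact mem_singleton_self i
      exact (mem_inter.mp this).1
  have hUS : (U.filter (fun A => A ∩ S = {i})).card = (n-s).choose (k-1) := by
    have h := countB hk_pos S i hiS
    rw [hS] at h
    exact h
  set T := U.filter (fun A => i ∈ A ∧ ¬(A ∩ S = {i})) with hTdef
  have hT : T.card + (n-s).choose (k-1) = (n-1).choose (k-1) := by
    rw [← hUi, ← hUS]
    have e1 : U.filter (fun A => A ∩ S = {i})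
        = (U.filter (fun A => i ∈ A)).filter (fun A => A ∩ S = {i}) := by
      rw [filter_filter]
      apply filter_congr
      intro A _
      constructor
      · intro h
        refine ⟨?_, h⟩
        have : i ∈ A ∩ S := by rw [h]; exact mem_singleton_self i
        exact (mem_inter.mp this).1
      · exact fun h => h.2
    have e2 : T = (U.filter (fun A => i ∈ A)).filter (fun A => ¬(A ∩ S = {i})) := by
      rw [hTdef, filter_filter]
    rw [e1, e2, add_comm]
    exact card_filter_add_card_filter_not _
  have hsub : F.filter (fun A => i ∈ A)
      ⊆ (F.filter (fun A => A ∩ S = {i})) ∪ T := by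
    intro A hA
    rw [mem_filter] at hA
    by_cases hAS : A ∩ S = {i}
    · exact mem_union_left _ (mem_filter.mpr ⟨hA.1, hAS⟩)
    · exact mem_union_right _ (mem_filter.mpr ⟨hFU hA.1, hA.2, hAS⟩)
  have hcount : F.card ≤ (F.filter (fun A => A ∩ S = {i})).card + T.card
      + (F.filter (fun A => i ∉ A)).card := by
    have hsplit : (F.filter (fun A => i ∈ A)).card + (F.filter (fun A => i ∉ A)).card
        = F.card := card_filter_add_card_filter_not _
    have h1 := card_le_card hsub
    have h2 := card_union_le (F.filter (fun A => A ∩ S = {i})) T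
    omega
  have hFlb : ((k:ℝ)/n - ε) * n.choose k ≤ F.card := by
    rw [ge_iff_le, le_div_iff₀ hCn] at hF
    exact hF
  have hEmub : ((F.filter (fun A => i ∉ A)).card : ℝ) ≤ ε * ((n-1).choose k) := by
    rw [div_le_iff₀ hCn1] at hEm
    exact hEm
  have hid : (k:ℝ)/n * n.choose k = ((n-1).choose (k-1) : ℕ) := by
    have h := Nat.add_one_mul_choose_eq (n-1) (k-1)
    have e1 : Nat.succ (n-1) = n := by omega
    have e3 : k - 1 + 1 = k := by omega
    rw [Nat.succ_eq_add_one] at e1; rw [e1, e3] at h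
    have hR : (n:ℝ) * ((n-1).choose (k-1) : ℕ) = (n.choose k : ℕ) * k := by exact_mod_cast h
    rw [div_mul_eq_mul_div, div_eq_iff hnR_pos.ne']
    linarith [hR]
  have hratio : (n.choose k : ℝ) ≤ (2/ζ)^s * ((n-s).choose (k-1)) := by
    have step1 : (n.choose k : ℝ) ≤ (1/ζ) * ((n-1).choose (k-1)) := by
      have h1 : (n.choose k : ℝ) * ζ ≤ ((n-1).choose (k-1) : ℕ) := by
        rw [← hid, div_mul_eq_mul_div, le_div_iff₀ hnR_pos]
        nlinarith [hk_real, hCn]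
      calc (n.choose k : ℝ) ≤ ((n-1).choose (k-1) : ℕ) / ζ := (le_div_iff₀ hζ).mpr h1
        _ = (1/ζ) * ((n-1).choose (k-1)) := by ring
    have step2 : ((n-1).choose (k-1) : ℝ) ≤ (2/ζ)^(s-1) * ((n-1-(s-1)).choose (k-1)) := by
      apply chain
      intro t ht
      constructor
      · omega
      · have e1 : n - 1 - t - (k-1) = n - k - t := by omega
        rw [e1, div_mul_eq_mul_div, le_div_iff₀ hζ]
        have c1 : ((n - 1 - t : ℕ):ℝ) ≤ n := by
          exact_mod_cast Nat.cast_le.mpr (by omega : n - 1 - t ≤ n)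
        have c2 : (n:ℝ) - k - t ≤ ((n - k - t : ℕ):ℝ) := by
          have he : ((n - k - t : ℕ):ℝ) = (n:ℝ) - k - t := by
            rw [Nat.cast_sub (by omega : t ≤ n - k), Nat.cast_sub (by omega : k ≤ n)]
          linarith [he.ge]
        have c4 : (t:ℝ) ≤ (s:ℝ) - 1 := by
          have h1 : (t:ℝ) ≤ ((s - 1 : ℕ):ℝ) := Nat.cast_le.mpr (by omega)
          rw [Nat.cast_sub hs1] at h1
          push_cast at h1
          linarith
        nlinarith [hζn, c2, c4, hkn_real, mul_le_mul_of_nonneg_left c1 hζ.le]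
    have e : n - 1 - (s-1) = n - s := by omega
    rw [e] at step2
    have hss : s = (s-1) + 1 := by omega
    calc (n.choose k : ℝ) ≤ (1/ζ) * ((n-1).choose (k-1)) := step1
      _ ≤ (1/ζ) * ((2/ζ)^(s-1) * ((n-s).choose (k-1))) :=
          mul_le_mul_of_nonneg_left step2 (by positivity)
      _ ≤ (2/ζ) * ((2/ζ)^(s-1) * ((n-s).choose (k-1))) := by
          apply mul_le_mul_of_nonneg_right _ (by positivity)
          rw [div_le_div_iff₀ hζ hζ]; nlinarith
      _ = (2/ζ)^s * ((n-s).choose (k-1)) := by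
          have hpow : (2/ζ) * (2/ζ)^(s-1) = (2/ζ)^s := by
            rw [← pow_succ']
            congr 1
            omega
          rw [← hpow]; ring
  rw [ge_iff_le, le_div_iff₀ hCns]
  have hTreal : (T.card : ℝ) + ((n-s).choose (k-1) : ℕ) = ((n-1).choose (k-1) : ℕ) := by
    exact_mod_cast hT
  have hcountR : (F.card : ℝ) ≤ ((F.filter (fun A => A ∩ S = {i})).card : ℝ) + T.card
      + ((F.filter (fun A => i ∉ A)).card : ℝ) := by exact_mod_cast hcount
  have hC1C0 : ((n-1).choose k : ℝ) ≤ n.choose k := by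
    exact_mod_cast Nat.choose_le_choose k (by omega : n - 1 ≤ n)
  have hKC : 2 * (n.choose k : ℝ) ≤ (2 * (2/ζ)^s) * ((n-s).choose (k-1)) := by
    nlinarith [hratio]
  nlinarith [hFlb, hEmub, hid, hTreal, hcountR,
    mul_le_mul_of_nonneg_left hC1C0 hε.le,
    mul_le_mul_of_nonneg_left hKC hε.le]
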